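/- For every integer r ≥ 2, the following identity holds in ℋ: ⧈(a b^{r−1}) = 2 a^{r−1}(a+b) + Σ_{j=1}^{r−2} a^{j}(a+b)^{r−j}, where juxtaposition and powers denote concatenation (so a^{j} is the j-fold concatenation of a, and (a+b)^{m} is the m-fold concatenation power of a+b expanded multilinearly, i.e. the sum of all words of length m). -/

import Mathlib

inductive Letter | a | b
deriving DecidableEq

abbrev Word := List Letter

/-- The algebra `ℋ`: formal `ℚ`-linear combinations of words. -/
abbrev H := Word →₀ ℚ

/-- The list of shuffles of two words (with multiplicity). -/
def shuffleList : Word → Word → List Word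
  | [], v => [v]
  | u, [] => [u]
  | x :: u, y :: v =>
      ((shuffleList u (y :: v)).map fun t => x :: t) ++
      ((shuffleList (x :: u) v).map fun t => y :: t)
termination_by u v => u.length + v.length
decreasing_by all_goals simp

/-- The shuffle product `u * v` of two words, as an element of `ℋ`. -/
noncomputable def shW (u v : Word) : H :=
  ((shuffleList u v).map fun t => Finsupp.single t (1 : ℚ)).sum

/-- The shuffle product of a word with an element of `ℋ`, extended linearly. -/
noncomputable def shWH (u : Word) (g : H) : H := g.sum fun v cv => cv • shW u v

/-- Concatenation of a word with an element of `ℋ`, extended linearly. -/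
noncomputable def concatWH (u : Word) (g : H) : H :=
  g.sum fun v c => Finsupp.single (u ++ v) c

/-- The list of all words of length `m`. -/
def wordsOfLength : ℕ → List Word
  | 0 => [[]]
  | n + 1 =>
      ((wordsOfLength n).map fun t => Letter.a :: t) ++
      ((wordsOfLength n).map fun t => Letter.b :: t)

/-- `(a+b)^m`, the `m`-fold concatenation power of `a+b` expanded multilinearly:
the sum of all words of length `m`. -/
noncomputable def abPow (m : ℕ) : H :=
  ((wordsOfLength m).map fun t => Finsupp.single t (1 : ℚ)).sum

/-- `(b-a)^m`, the `m`-fold concatenation power of `b-a` expanded multilinearly: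
the signed sum of all words of length `m`. -/
noncomputable def bmaPow (m : ℕ) : H :=
  ((wordsOfLength m).map fun t =>
    Finsupp.single t ((-1 : ℚ) ^ t.count Letter.a)).sum

def sigmaL : Letter → Letter
  | .a => .b
  | .b => .a

/-- `σ(c₁⋯c_n) = σ(c_n)⋯σ(c₁)` with `σ(a)=b`, `σ(b)=a`. -/
def sigmaW (w : Word) : Word := (w.map sigmaL).reverse

/-- The operator `⧈` : `⧈(c₁⋯c_n) = Σ_{i=0}^{n} (c₁⋯c_i) * σ(c_{i+1}⋯c_n)`. -/
noncomputable def box (w : Word) : H :=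
  ∑ i ∈ Finset.range (w.length + 1), shW (w.take i) (sigmaW (w.drop i))

lemma concatWH_eq_mapDomain (u : Word) (g : H) :
    concatWH u g = Finsupp.mapDomain (u ++ ·) g := rfl
lemma concatWH_add (u : Word) (f g : H) : concatWH u (f + g) = concatWH u f + concatWH u g := by
  simp [concatWH_eq_mapDomain, Finsupp.mapDomain_add]
lemma concatWH_sum {α : Type*} (u : Word) (s : Finset α) (f : α → H) :
    concatWH u (∑ x ∈ s, f x) = ∑ x ∈ s, concatWH u (f x) := by
  simp [concatWH_eq_mapDomain, Finsupp.mapDomain_finset_sum]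
lemma concatWH_single (u v : Word) (c : ℚ) :
    concatWH u (Finsupp.single v c) = Finsupp.single (u ++ v) c := by
  simp [concatWH_eq_mapDomain, Finsupp.mapDomain_single]
lemma concatWH_concatWH (u v : Word) (g : H) :
    concatWH u (concatWH v g) = concatWH (u ++ v) g := by
  simp only [concatWH_eq_mapDomain, ← Finsupp.mapDomain_comp]
  congr 1; ext w; simp [Function.comp]
lemma mapDomain_list_sum (f : Word → Word) (l : List H) :
    Finsupp.mapDomain f l.sum = (l.map (Finsupp.mapDomain f)).sum :=
  map_list_sum (Finsupp.mapDomain.addMonoidHom f) l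
lemma shW_nil_left (v : Word) : shW [] v = Finsupp.single v 1 := by simp [shW, shuffleList]
lemma shW_nil_right (u : Word) : shW u [] = Finsupp.single u 1 := by
  cases u <;> simp [shW, shuffleList]
lemma shW_cons (x y : Letter) (u v : Word) :
    shW (x::u) (y::v) = concatWH [x] (shW u (y::v)) + concatWH [y] (shW (x::u) v) := by
  rw [concatWH_eq_mapDomain, concatWH_eq_mapDomain, shW, shuffleList]
  rw [List.map_append, List.sum_append, shW, shW, mapDomain_list_sum, mapDomain_list_sum]
  simp [List.map_map, Function.comp_def, Finsupp.mapDomain_single]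

open Finset Letter

noncomputable def S (m n : ℕ) : H := shW (List.replicate m Letter.b) (List.replicate n Letter.a)

lemma S_zero_left (n : ℕ) : S 0 n = Finsupp.single (List.replicate n a) 1 := shW_nil_left _
lemma S_zero_right (m : ℕ) : S m 0 = Finsupp.single (List.replicate m b) 1 := shW_nil_right _
lemma S_succ (m n : ℕ) :
    S (m+1) (n+1) = concatWH [b] (S m (n+1)) + concatWH [a] (S (m+1) n) := by
  simpa [S, List.replicate_succ] using shW_cons b a (List.replicate m b) (List.replicate n a)

lemma abPow_zero : abPow 0 = Finsupp.single [] 1 := by simp [abPow, wordsOfLength]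
lemma abPow_succ (L : ℕ) :
    abPow (L+1) = concatWH [a] (abPow L) + concatWH [b] (abPow L) := by
  rw [concatWH_eq_mapDomain, concatWH_eq_mapDomain, abPow, wordsOfLength]
  rw [List.map_append, List.sum_append, abPow, mapDomain_list_sum, mapDomain_list_sum]
  simp [List.map_map, Function.comp_def, Finsupp.mapDomain_single]

lemma sum_S (L : ℕ) : ∑ p ∈ antidiagonal L, S p.1 p.2 = abPow L := by
  induction L with
  | zero => simp [abPow_zero, S_zero_left]
  | succ L ih =>
    have key : ∀ p ∈ antidiagonal (L+1), S p.1 p.2 =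
        (if p.1 = 0 then 0 else concatWH [b] (S (p.1-1) p.2)) +
        (if p.2 = 0 then 0 else concatWH [a] (S p.1 (p.2-1))) := by
      rintro ⟨m, n⟩ hp
      simp only [Finset.HasAntidiagonal.mem_antidiagonal] at hp
      match m, n with
      | 0, n+1 => simp [S_zero_left, List.replicate_succ, concatWH_single]
      | m+1, 0 => simp [S_zero_right, List.replicate_succ, concatWH_single]
      | m+1, n+1 => simpa using S_succ m n
    rw [Finset.sum_congr rfl key, Finset.sum_add_distrib]
    rw [Finset.Nat.sum_antidiagonal_succ
      (f := fun p => if p.1 = 0 then 0 else concatWH [b] (S (p.1-1) p.2))]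
    rw [Finset.Nat.sum_antidiagonal_succ'
      (f := fun p => if p.2 = 0 then 0 else concatWH [a] (S p.1 (p.2-1)))]
    simp only [if_pos rfl, Nat.succ_ne_zero, if_neg, Nat.add_sub_cancel, zero_add,
      reduceIte, Nat.add_one_sub_one]
    rw [← concatWH_sum, ← concatWH_sum, ih, abPow_succ]
    exact add_comm _ _

noncomputable def T (m n : ℕ) : H := shW (Letter.a :: List.replicate m Letter.b) (List.replicate n Letter.a)

lemma T_zero (m : ℕ) : T m 0 = Finsupp.single (a :: List.replicate m b) 1 := shW_nil_right _
lemma T_succ (m n : ℕ) :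
    T m (n+1) = concatWH [a] (S m (n+1)) + concatWH [a] (T m n) := by
  simpa [T, S, List.replicate_succ] using shW_cons a a (List.replicate m b) (List.replicate n a)

lemma T_closed (m n : ℕ) :
    T m n = ∑ s ∈ range (n+1), concatWH (List.replicate (n+1-s) a) (S m s) := by
  induction n with
  | zero => simp [T_zero, S_zero_right, concatWH_single, List.replicate_succ]
  | succ n ih =>
    rw [T_succ, ih, concatWH_sum]
    have : ∀ s ∈ range (n+1),
        concatWH [a] (concatWH (List.replicate (n+1-s) a) (S m s)) =
        concatWH (List.replicate (n+2-s) a) (S m s) := by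
      intro s hs
      simp only [Finset.mem_range] at hs
      rw [concatWH_concatWH]
      congr 1
      have : (a :: List.replicate (n+1-s) a) = List.replicate (n+2-s) a := by
        rw [← List.replicate_succ]; congr 1; omega
      simpa using this
    rw [Finset.sum_congr rfl this]
    conv_rhs => rw [Finset.sum_range_succ]
    have h2 : n + 1 + 1 - (n+1) = 1 := by omega
    have h3 : ∀ s, n + 1 + 1 - s = n + 2 - s := by intro s; omega
    simp only [h2, h3, List.replicate_one]
    exact add_comm _ _


lemma box_ab (k : ℕ) : box (a :: List.replicate k b) =
    Finsupp.single (List.replicate k a ++ [b]) 1 + ∑ i ∈ range (k+1), T i (k - i) := by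
  unfold _root_.box
  have hlen : (a :: List.replicate k b).length + 1 = (k + 1) + 1 := by simp
  rw [hlen, Finset.sum_range_succ']
  have h0 : shW ((a :: List.replicate k b).take 0) (sigmaW ((a :: List.replicate k b).drop 0)) =
      Finsupp.single (List.replicate k a ++ [b]) 1 := by
    simp [shW_nil_left, sigmaW, sigmaL, List.map_replicate]
  rw [h0]
  rw [add_comm]
  congr 1
  refine Finset.sum_congr rfl ?_
  intro i hi
  simp only [Finset.mem_range] at hi
  have h1 : (a :: List.replicate k b).take (i+1) = a :: List.replicate i b := by
    simp [List.take_replicate]; omega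
  have h2 : sigmaW ((a :: List.replicate k b).drop (i+1)) = List.replicate (k - i) a := by
    simp [sigmaW, List.drop_replicate, List.map_replicate, sigmaL]
  rw [h1, h2]; rfl

lemma swap_sum (k : ℕ) : ∑ i ∈ range (k+1), T i (k - i) =
    ∑ t ∈ range (k+1), concatWH (List.replicate (t+1) a) (abPow (k - t)) := by
  have lhs_eq : ∑ i ∈ range (k+1), T i (k - i) =
      ∑ p ∈ (range (k+1)).sigma (fun i => range (k - i + 1)),
        concatWH (List.replicate (k - p.1 - p.2 + 1) a) (S p.1 p.2) := by
    rw [Finset.sum_sigma]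
    refine Finset.sum_congr rfl ?_
    intro i hi
    simp only [Finset.mem_range] at hi
    rw [T_closed]
    refine Finset.sum_congr rfl ?_
    intro s hs
    simp only [Finset.mem_range] at hs
    dsimp only
    congr 2
    omega
  have rhs_eq : ∑ t ∈ range (k+1), concatWH (List.replicate (t+1) a) (abPow (k - t)) =
      ∑ p ∈ (range (k+1)).sigma (fun t => range (k - t + 1)),
        concatWH (List.replicate (p.1+1) a) (S p.2 (k - p.1 - p.2)) := by
    rw [Finset.sum_sigma]
    refine Finset.sum_congr rfl ?_
    intro t ht
    simp only [Finset.mem_range] at ht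
    rw [← sum_S, concatWH_sum, Finset.Nat.sum_antidiagonal_eq_sum_range_succ_mk]
  rw [lhs_eq, rhs_eq]
  refine Finset.sum_nbij' (fun p => ⟨k - p.1 - p.2, p.1⟩) (fun p => ⟨p.2, k - p.1 - p.2⟩)
    ?_ ?_ ?_ ?_ ?_
  · rintro ⟨x, y⟩ hp
    simp only [Finset.mem_sigma, Finset.mem_range] at hp
    simp only [Finset.mem_sigma, Finset.mem_range]
    omega
  · rintro ⟨x, y⟩ hp
    simp only [Finset.mem_sigma, Finset.mem_range] at hp
    simp only [Finset.mem_sigma, Finset.mem_range]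
    omega
  · rintro ⟨x, y⟩ hp
    simp only [Finset.mem_sigma, Finset.mem_range] at hp
    dsimp only
    simp only [Sigma.mk.inj_iff, heq_eq_eq]
    constructor <;> first | trivial | omega
  · rintro ⟨x, y⟩ hp
    simp only [Finset.mem_sigma, Finset.mem_range] at hp
    dsimp only
    simp only [Sigma.mk.inj_iff, heq_eq_eq]
    constructor <;> first | trivial | omega
  · rintro ⟨x, y⟩ hp
    simp only [Finset.mem_sigma, Finset.mem_range] at hp
    dsimp only
    have h1 : k - (k - x - y) - x = y := by omega
    rw [h1]


/-- For `r ≥ 2`: `⧈(a b^{r-1}) = 2 a^{r-1}(a+b) + Σ_{j=1}^{r-2} a^j (a+b)^{r-j}`,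
products on the right-hand side being concatenation. -/
theorem statement6 (r : ℕ) (hr : 2 ≤ r) :
    box (Letter.a :: List.replicate (r - 1) Letter.b) =
      (2 : ℚ) • concatWH (List.replicate (r - 1) Letter.a) (abPow 1) +
      ∑ j ∈ Finset.Icc 1 (r - 2), concatWH (List.replicate j Letter.a) (abPow (r - j)) := by
  obtain ⟨q, rfl⟩ : ∃ q, r = q + 2 := ⟨r - 2, by omega⟩
  have h1 : q + 2 - 1 = q + 1 := rfl
  have h2 : q + 2 - 2 = q := rfl
  rw [h1, h2, box_ab, swap_sum]
  rw [Finset.sum_range_succ, Finset.sum_range_succ]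
  have e0 : concatWH (List.replicate (q+1) a) (abPow (q + 1 - q)) =
      Finsupp.single (List.replicate (q+2) a) 1 + Finsupp.single (List.replicate (q+1) a ++ [b]) 1 := by
    have hq : q + 1 - q = 1 := by omega
    have hab : abPow 1 = Finsupp.single [a] 1 + Finsupp.single [b] 1 := by
      rw [show (1:ℕ) = 0 + 1 from rfl, abPow_succ, abPow_zero, concatWH_single, concatWH_single]
      simp
    rw [hq, hab, concatWH_add, concatWH_single, concatWH_single]
    congr 2
    rw [← List.replicate_succ']
  have e1 : concatWH (List.replicate (q+1+1) a) (abPow (q + 1 - (q+1))) =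
      Finsupp.single (List.replicate (q+2) a) 1 := by
    have hq : q + 1 - (q+1) = 0 := by omega
    rw [hq, abPow_zero, concatWH_single, List.append_nil]
  have e2 : ∑ j ∈ Finset.Icc 1 q, concatWH (List.replicate j a) (abPow (q+2-j)) =
      ∑ t ∈ range q, concatWH (List.replicate (t+1) a) (abPow (q+1-t)) := by
    refine Finset.sum_nbij' (fun j => j - 1) (fun t => t + 1) ?_ ?_ ?_ ?_ ?_ <;>
      intro x hx <;> simp only [Finset.mem_Icc, Finset.mem_range] at hx ⊢
    · omega
    · omega
    · omega
    · omega
    · rw [show x = (x - 1) + 1 by omega, show q + 2 - ((x-1)+1) = q + 1 - (x - 1) by omega]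
      simp
  have e3 : concatWH (List.replicate (q+1) a) (abPow 1) =
      Finsupp.single (List.replicate (q+2) a) 1 + Finsupp.single (List.replicate (q+1) a ++ [b]) 1 := by
    have e4 := e0
    rw [show q + 1 - q = 1 by omega] at e4
    exact e4
  rw [e0, e1, e2, e3, two_smul]
  abel
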